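/- The C(n+d−1, n−1) polynomials ∏_{i=0}^{n−1} (x_i² − x_n²)^{a_i}, where (a₀,…,a_{n−1}) ranges over all vectors in ℕ^n with a₀ + … + a_{n−1} = d, are ℂ-linearly independent. -/

import Mathlib

open MvPolynomial

lemma stmt14_aux {ι σ : Type*} [DecidableEq ι] (s : Finset ι) (f : ι → (σ →₀ ℕ)) :
    ∏ i ∈ s, monomial (f i) (1:ℂ) = monomial (∑ i ∈ s, f i) 1 := by
  induction s using Finset.induction with
  | empty => simp
  | @insert a s h ih => rw [Finset.prod_insert h, Finset.sum_insert h, ih, monomial_mul, one_mul]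

theorem stmt14 (n d : ℕ) (hn : 1 ≤ n) (hd : 1 ≤ d) :
    LinearIndependent ℂ
      (fun a : {a : Fin n → ℕ // ∑ i, a i = d} =>
        ∏ i : Fin n,
          (X (Fin.castSucc i) ^ 2 - X (Fin.last n) ^ 2 :
            MvPolynomial (Fin (n+1)) ℂ) ^ a.1 i) := by
  set φ : MvPolynomial (Fin (n+1)) ℂ →ₐ[ℂ] MvPolynomial (Fin (n+1)) ℂ :=
    aeval (fun j => if j = Fin.last n then 0 else X j) with hφ
  apply LinearIndependent.of_comp φ.toLinearMap
  set g : {a : Fin n → ℕ // ∑ i, a i = d} → (Fin (n+1) →₀ ℕ) :=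
    fun a => ∑ i : Fin n, Finsupp.single (Fin.castSucc i) (2 * a.1 i) with hg
  have hginj : Function.Injective g := by
    intro a b hab
    have key : ∀ c : {a : Fin n → ℕ // ∑ i, a i = d}, ∀ i : Fin n,
        g c (Fin.castSucc i) = 2 * c.1 i := by
      intro c i
      simp only [hg, Finsupp.finset_sum_apply]
      rw [Finset.sum_eq_single i]
      · simp
      · intro j _ hj
        rw [Finsupp.single_apply, if_neg (by simpa using (fun h => hj (Fin.castSucc_injective n h)))]
      · simp
    ext i
    have := DFunLike.congr_fun hab (Fin.castSucc i)
    rw [key a i, key b i] at this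
    omega
  have hb := ((basisMonomials (Fin (n+1)) ℂ).linearIndependent.comp g hginj)
  convert hb using 1
  funext a
  have hne : ∀ i : Fin n, Fin.castSucc i ≠ Fin.last n := fun i => (Fin.castSucc_lt_last i).ne
  have step : ∀ i : Fin n,
      φ ((X (Fin.castSucc i) ^ 2 - X (Fin.last n) ^ 2 : MvPolynomial (Fin (n+1)) ℂ) ^ a.1 i)
        = monomial (Finsupp.single (Fin.castSucc i) (2 * a.1 i)) (1:ℂ) := by
    intro i
    simp only [hφ, map_pow, map_sub, aeval_X, if_neg (hne i), if_pos rfl, if_true]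
    rw [zero_pow two_ne_zero, sub_zero, ← pow_mul, X_pow_eq_monomial]
  simp only [Function.comp, AlgHom.toLinearMap_apply, coe_basisMonomials, map_prod]
  rw [Finset.prod_congr rfl (fun i _ => step i), hg, stmt14_aux]
  all_goals rfl
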